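/- Let $M \sim \chi^2_p(\lambda)$ with c.d.f. $F_M$, and for $s > 1$ let $a(s) = F_M^{-1}(1/s)$ be the $1/s$-quantile. Then as $s \uparrow \infty$, $a(s) \sim \left(s^{-1} e^{\lambda/2} \, 2^{p/2} \, \Gamma(p/2+1)\right)^{2/p}$, i.e., the ratio tends to 1. -/

import Mathlib

open MeasureTheory Filter

/-- The c.d.f. of the chi-squared distribution with (real) degrees of freedom `d`. -/
noncomputable def chiSqCDF (d : ℝ) (a : ℝ) : ℝ :=
  ∫ x in (0:ℝ)..a, x ^ (d/2 - 1) * Real.exp (-x/2) / (2 ^ (d/2) * Real.Gamma (d/2))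

/-- The c.d.f. of the non-central chi-squared distribution `χ²_p(lam)`, via the
Poisson mixture representation. -/
noncomputable def ncChiSqCDF (p : ℕ) (lam : ℝ) (a : ℝ) : ℝ :=
  ∑' k : ℕ, Real.exp (-lam/2) * (lam/2) ^ k / (Nat.factorial k) * chiSqCDF ((p : ℝ) + 2 * k) a

namespace QAux

lemma intInt {r : ℝ} (hr : -1 < r) (a : ℝ) :
    IntervalIntegrable (fun x => x ^ r * Real.exp (-x/2)) volume 0 a :=
  (intervalIntegral.intervalIntegrable_rpow' hr).mul_continuousOn
    (Continuous.continuousOn (by continuity))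

lemma integral_rpow_eq {d a : ℝ} (hd : 0 < d) :
    ∫ x in (0:ℝ)..a, x ^ (d/2 - 1) = a ^ (d/2) / (d/2) := by
  have hr : (-1:ℝ) < d/2 - 1 := by linarith
  rw [integral_rpow (Or.inl hr)]
  have h1 : d/2 - 1 + 1 = d/2 := by ring
  rw [h1, Real.zero_rpow (by positivity : d/2 ≠ 0)]
  ring

lemma integral_le {d a : ℝ} (hd : 0 < d) (ha : 0 ≤ a) :
    (∫ x in (0:ℝ)..a, x ^ (d/2 - 1) * Real.exp (-x/2)) ≤ a ^ (d/2) / (d/2) := by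
  have hr : (-1:ℝ) < d/2 - 1 := by linarith
  rw [← integral_rpow_eq (a := a) hd]
  apply intervalIntegral.integral_mono_on ha (intInt hr a)
    (intervalIntegral.intervalIntegrable_rpow' hr)
  intro x hx
  have hx0 : 0 ≤ x := hx.1
  have : Real.exp (-x/2) ≤ 1 := by
    rw [← Real.exp_zero]
    apply Real.exp_le_exp.2; linarith
  calc x ^ (d/2-1) * Real.exp (-x/2) ≤ x ^ (d/2-1) * 1 :=
        mul_le_mul_of_nonneg_left this (Real.rpow_nonneg hx0 _)
    _ = x ^ (d/2-1) := mul_one _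

lemma integral_ge {d a : ℝ} (hd : 0 < d) (ha : 0 ≤ a) :
    Real.exp (-a/2) * (a ^ (d/2) / (d/2)) ≤
      ∫ x in (0:ℝ)..a, x ^ (d/2 - 1) * Real.exp (-x/2) := by
  have hr : (-1:ℝ) < d/2 - 1 := by linarith
  have h1 : Real.exp (-a/2) * (a ^ (d/2) / (d/2))
      = ∫ x in (0:ℝ)..a, Real.exp (-a/2) * x ^ (d/2-1) := by
    rw [intervalIntegral.integral_const_mul, integral_rpow_eq hd]
  rw [h1]
  apply intervalIntegral.integral_mono_on ha
    ((intervalIntegral.intervalIntegrable_rpow' hr).const_mul _) (intInt hr a)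
  intro x hx
  have hx0 : 0 ≤ x := hx.1
  have : Real.exp (-a/2) ≤ Real.exp (-x/2) := by
    apply Real.exp_le_exp.2; linarith [hx.2]
  calc Real.exp (-a/2) * x ^ (d/2-1) ≤ Real.exp (-x/2) * x ^ (d/2-1) :=
        mul_le_mul_of_nonneg_right this (Real.rpow_nonneg hx0 _)
    _ = x ^ (d/2-1) * Real.exp (-x/2) := mul_comm _ _

lemma chiSq_eq (d a : ℝ) :
    chiSqCDF d a = (∫ x in (0:ℝ)..a, x ^ (d/2 - 1) * Real.exp (-x/2))
      / (2 ^ (d/2) * Real.Gamma (d/2)) := by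
  unfold chiSqCDF
  rw [intervalIntegral.integral_div]

lemma gamma_succ {d : ℝ} (hd : 0 < d) :
    Real.Gamma (d/2 + 1) = (d/2) * Real.Gamma (d/2) :=
  Real.Gamma_add_one (by positivity)

lemma denom_eq {d a : ℝ} (hd : 0 < d) :
    a ^ (d/2) / (2 ^ (d/2) * Real.Gamma (d/2 + 1))
      = (a ^ (d/2) / (d/2)) / (2 ^ (d/2) * Real.Gamma (d/2)) := by
  rw [gamma_succ hd, div_div]
  ring_nf

lemma chiSq_le {d a : ℝ} (hd : 0 < d) (ha : 0 ≤ a) :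
    chiSqCDF d a ≤ a ^ (d/2) / (2 ^ (d/2) * Real.Gamma (d/2 + 1)) := by
  rw [chiSq_eq, denom_eq hd]
  have h1 : (0:ℝ) < Real.Gamma (d/2) := Real.Gamma_pos_of_pos (by positivity)
  have h2 : (0:ℝ) < (2:ℝ) ^ (d/2) := Real.rpow_pos_of_pos (by norm_num) _
  apply div_le_div_of_nonneg_right (integral_le hd ha) (by positivity) |>.trans_eq rfl

lemma chiSq_ge {d a : ℝ} (hd : 0 < d) (ha : 0 ≤ a) :
    Real.exp (-a/2) * (a ^ (d/2) / (2 ^ (d/2) * Real.Gamma (d/2 + 1))) ≤ chiSqCDF d a := by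
  rw [chiSq_eq, denom_eq hd]
  have h1 : (0:ℝ) < Real.Gamma (d/2) := Real.Gamma_pos_of_pos (by positivity)
  have h2 : (0:ℝ) < (2:ℝ) ^ (d/2) := Real.rpow_pos_of_pos (by norm_num) _
  rw [mul_div_assoc']
  exact div_le_div_of_nonneg_right (integral_ge hd ha) (by positivity)

lemma chiSq_nonneg {d a : ℝ} (hd : 0 < d) (ha : 0 ≤ a) : 0 ≤ chiSqCDF d a := by
  apply intervalIntegral.integral_nonneg ha
  intro x hx
  have hx0 : 0 ≤ x := hx.1
  have h1 : (0:ℝ) < Real.Gamma (d/2) := Real.Gamma_pos_of_pos (by positivity)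
  have h2 : (0:ℝ) < (2:ℝ) ^ (d/2) := Real.rpow_pos_of_pos (by norm_num) _
  positivity

lemma chiSq_mono {d : ℝ} (hd : 0 < d) {a b : ℝ} (ha : 0 ≤ a) (hab : a ≤ b) :
    chiSqCDF d a ≤ chiSqCDF d b := by
  have hr : (-1:ℝ) < d/2 - 1 := by linarith
  unfold chiSqCDF
  apply intervalIntegral.integral_mono_interval le_rfl ha hab
  · apply (ae_restrict_iff' measurableSet_Ioc).2
    apply ae_of_all
    intro x hx
    have hx0 : 0 ≤ x := hx.1.le
    have h1 : (0:ℝ) < Real.Gamma (d/2) := Real.Gamma_pos_of_pos (by positivity)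
    have h2 : (0:ℝ) < (2:ℝ) ^ (d/2) := Real.rpow_pos_of_pos (by norm_num) _
    positivity
  · exact (intInt hr b).div_const _

lemma gamma_ratio {p : ℕ} (hp : 1 ≤ p) (k : ℕ) :
    Real.Gamma ((p:ℝ)/2 + 1) ≤ Real.Gamma ((p:ℝ)/2 + k + 1) := by
  have hp0 : (0:ℝ) < p := by exact_mod_cast hp
  induction k with
  | zero => simp
  | succ n ih =>
    have hx : (0:ℝ) < (p:ℝ)/2 + n + 1 := by positivity
    have key : Real.Gamma ((p:ℝ)/2 + (n+1:ℕ) + 1)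
        = ((p:ℝ)/2 + n + 1) * Real.Gamma ((p:ℝ)/2 + n + 1) := by
      push_cast
      have : (p:ℝ)/2 + (n+1) + 1 = ((p:ℝ)/2 + n + 1) + 1 := by ring
      rw [this, Real.Gamma_add_one (ne_of_gt hx)]
    rw [key]
    have hΓ : 0 < Real.Gamma ((p:ℝ)/2 + n + 1) := Real.Gamma_pos_of_pos hx
    nlinarith [ih]

section NC

variable {p : ℕ} {lam : ℝ}

/-- The leading constant. -/
noncomputable def c0 (p : ℕ) (lam : ℝ) : ℝ :=
  Real.exp (-lam/2) / (2 ^ ((p:ℝ)/2) * Real.Gamma ((p:ℝ)/2 + 1))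

lemma c0_pos (hp : 1 ≤ p) (lam : ℝ) : 0 < c0 p lam := by
  have hp0 : (0:ℝ) < p := by exact_mod_cast hp
  have hΓ1 : 0 < Real.Gamma ((p:ℝ)/2 + 1) := Real.Gamma_pos_of_pos (by positivity)
  have h2p : (0:ℝ) < (2:ℝ) ^ ((p:ℝ)/2) := Real.rpow_pos_of_pos (by norm_num) _
  unfold c0
  positivity

lemma term_nonneg (hp : 1 ≤ p) (hlam : 0 ≤ lam) {a : ℝ} (ha : 0 ≤ a) (k : ℕ) :
    0 ≤ Real.exp (-lam/2) * (lam/2) ^ k / (Nat.factorial k) * chiSqCDF ((p : ℝ) + 2 * k) a := by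
  have hp0 : (0:ℝ) < p := by exact_mod_cast hp
  have hd : (0:ℝ) < (p:ℝ) + 2*k := by positivity
  have hcs := chiSq_nonneg hd ha
  positivity

lemma term_le (hp : 1 ≤ p) (hlam : 0 ≤ lam) {a : ℝ} (ha : 0 < a) (k : ℕ) :
    Real.exp (-lam/2) * (lam/2) ^ k / (Nat.factorial k) * chiSqCDF ((p : ℝ) + 2 * k) a
      ≤ c0 p lam * a ^ ((p:ℝ)/2) * ((lam*a/4) ^ k / (Nat.factorial k)) := by
  have hp0 : (0:ℝ) < p := by exact_mod_cast hp
  have hd : (0:ℝ) < (p:ℝ) + 2*k := by positivity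
  have hhalf : ((p:ℝ) + 2*(k:ℝ))/2 = (p:ℝ)/2 + (k:ℝ) := by ring
  have hΓ1 : 0 < Real.Gamma ((p:ℝ)/2 + 1) := Real.Gamma_pos_of_pos (by positivity)
  have hΓ2 : 0 < Real.Gamma ((p:ℝ)/2 + (k:ℝ) + 1) := Real.Gamma_pos_of_pos (by positivity)
  have h2p : (0:ℝ) < (2:ℝ) ^ ((p:ℝ)/2) := Real.rpow_pos_of_pos (by norm_num) _
  have hcs : chiSqCDF ((p:ℝ)+2*k) a
      ≤ a ^ ((p:ℝ)/2 + (k:ℝ)) / (2 ^ ((p:ℝ)/2 + (k:ℝ)) * Real.Gamma ((p:ℝ)/2 + (k:ℝ) + 1)) := by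
    have h := chiSq_le hd ha.le
    rwa [hhalf] at h
  have hsplit_a : a ^ ((p:ℝ)/2 + (k:ℝ)) = a ^ ((p:ℝ)/2) * a ^ k := by
    rw [Real.rpow_add ha, Real.rpow_natCast]
  have hsplit_2 : (2:ℝ) ^ ((p:ℝ)/2 + (k:ℝ)) = 2 ^ ((p:ℝ)/2) * 2 ^ k := by
    rw [Real.rpow_add (by norm_num : (0:ℝ) < 2), Real.rpow_natCast]
  have hmain : a ^ ((p:ℝ)/2 + (k:ℝ)) / (2 ^ ((p:ℝ)/2 + (k:ℝ)) * Real.Gamma ((p:ℝ)/2 + (k:ℝ) + 1))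
      ≤ a ^ ((p:ℝ)/2) * a ^ k / (2 ^ ((p:ℝ)/2) * 2 ^ k * Real.Gamma ((p:ℝ)/2 + 1)) := by
    rw [hsplit_a, hsplit_2]
    gcongr
    exact_mod_cast gamma_ratio hp k
  have hcoef : 0 ≤ Real.exp (-lam/2) * (lam/2) ^ k / (Nat.factorial k) := by positivity
  have heq : Real.exp (-lam/2) * (lam/2) ^ k / (Nat.factorial k)
        * (a ^ ((p:ℝ)/2) * a ^ k / (2 ^ ((p:ℝ)/2) * 2 ^ k * Real.Gamma ((p:ℝ)/2 + 1)))
      = c0 p lam * a ^ ((p:ℝ)/2) * ((lam*a/4) ^ k / (Nat.factorial k)) := by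
    have hpow : (lam*a/4) ^ k = (lam/2) ^ k * (a ^ k / 2 ^ k) := by
      have h4 : lam*a/4 = (lam/2) * (a/2) := by ring
      rw [h4, mul_pow, div_pow, div_pow]
    have hfac : (0:ℝ) < (Nat.factorial k : ℝ) := by positivity
    rw [hpow]
    unfold c0
    field_simp
  calc Real.exp (-lam/2) * (lam/2) ^ k / (Nat.factorial k) * chiSqCDF ((p : ℝ) + 2 * k) a
      ≤ Real.exp (-lam/2) * (lam/2) ^ k / (Nat.factorial k)
        * (a ^ ((p:ℝ)/2) * a ^ k / (2 ^ ((p:ℝ)/2) * 2 ^ k * Real.Gamma ((p:ℝ)/2 + 1))) :=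
        mul_le_mul_of_nonneg_left (hcs.trans hmain) hcoef
    _ = _ := heq

lemma summable_g (C x : ℝ) : Summable (fun k : ℕ => C * (x ^ k / (Nat.factorial k : ℝ))) :=
  (Real.summable_pow_div_factorial x).mul_left C

lemma tsum_g (C x : ℝ) : ∑' k : ℕ, C * (x ^ k / (Nat.factorial k : ℝ)) = C * Real.exp x := by
  rw [tsum_mul_left]
  congr 1
  rw [Real.exp_eq_exp_ℝ, NormedSpace.exp_eq_tsum_div]

lemma term_summable (hp : 1 ≤ p) (hlam : 0 ≤ lam) {a : ℝ} (ha : 0 < a) :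
    Summable (fun k : ℕ =>
      Real.exp (-lam/2) * (lam/2) ^ k / (Nat.factorial k) * chiSqCDF ((p : ℝ) + 2 * k) a) :=
  Summable.of_nonneg_of_le (term_nonneg hp hlam ha.le) (term_le hp hlam ha)
    (summable_g (c0 p lam * a ^ ((p:ℝ)/2)) (lam*a/4))

lemma ncF_le (hp : 1 ≤ p) (hlam : 0 ≤ lam) {a : ℝ} (ha : 0 < a) :
    ncChiSqCDF p lam a ≤ c0 p lam * a ^ ((p:ℝ)/2) * Real.exp (lam*a/4) := by
  unfold ncChiSqCDF
  calc _ ≤ ∑' k : ℕ, (c0 p lam * a ^ ((p:ℝ)/2)) * ((lam*a/4) ^ k / (Nat.factorial k : ℝ)) :=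
        Summable.tsum_le_tsum (fun k => by
            have := term_le hp hlam ha k
            rw [mul_assoc] at this ⊢
            exact this)
          (term_summable hp hlam ha) (summable_g _ _)
    _ = (c0 p lam * a ^ ((p:ℝ)/2)) * Real.exp (lam*a/4) := tsum_g _ _
    _ = _ := by ring

lemma ncF_ge (hp : 1 ≤ p) (hlam : 0 ≤ lam) {a : ℝ} (ha : 0 < a) :
    c0 p lam * a ^ ((p:ℝ)/2) * Real.exp (-a/2) ≤ ncChiSqCDF p lam a := by
  have hp0 : (0:ℝ) < p := by exact_mod_cast hp
  have h0 := Summable.le_tsum (term_summable hp hlam ha) 0 (fun j _ => term_nonneg hp hlam ha.le j)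
  have h0' : Real.exp (-lam/2) * chiSqCDF ((p:ℝ)) a ≤ ncChiSqCDF p lam a := by
    unfold ncChiSqCDF
    simpa using h0
  refine le_trans ?_ h0'
  have h := chiSq_ge (d := (p:ℝ)) hp0 ha.le
  calc c0 p lam * a ^ ((p:ℝ)/2) * Real.exp (-a/2)
      = Real.exp (-lam/2)
        * (Real.exp (-a/2) * (a ^ ((p:ℝ)/2) / (2 ^ ((p:ℝ)/2) * Real.Gamma ((p:ℝ)/2 + 1)))) := by
        unfold c0; ring
    _ ≤ Real.exp (-lam/2) * chiSqCDF ((p:ℝ)) a :=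
        mul_le_mul_of_nonneg_left h (Real.exp_nonneg _)

lemma ncF_mono (hp : 1 ≤ p) (hlam : 0 ≤ lam) {a b : ℝ} (ha : 0 < a) (hab : a ≤ b) :
    ncChiSqCDF p lam a ≤ ncChiSqCDF p lam b := by
  have hp0 : (0:ℝ) < p := by exact_mod_cast hp
  unfold ncChiSqCDF
  refine Summable.tsum_le_tsum (fun k => ?_) (term_summable hp hlam ha)
    (term_summable hp hlam (ha.trans_le hab))
  have hd : (0:ℝ) < (p:ℝ) + 2*k := by positivity
  exact mul_le_mul_of_nonneg_left (chiSq_mono hd ha.le hab) (by positivity)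

end NC

end QAux


/-- If `a(s)` is the `1/s`-quantile of `χ²_p(λ)`, then as `s ↑ ∞`,
`a(s) ~ (s⁻¹ e^{λ/2} 2^{p/2} Γ(p/2+1))^{2/p}`. -/
theorem quantile_asymptotic (p : ℕ) (hp : 1 ≤ p) (lam : ℝ) (hlam : 0 ≤ lam)
    (a : ℝ → ℝ)
    (ha : ∀ s : ℝ, 1 < s → 0 < a s ∧ ncChiSqCDF p lam (a s) = 1/s) :
    Tendsto (fun s : ℝ =>
        a s / (s⁻¹ * Real.exp (lam/2) * 2 ^ ((p : ℝ)/2) * Real.Gamma ((p : ℝ)/2 + 1))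
          ^ (2/(p : ℝ)))
      atTop (nhds 1) := by
  have hp0 : (0:ℝ) < p := by exact_mod_cast hp
  have hΓ1 : 0 < Real.Gamma ((p:ℝ)/2 + 1) := Real.Gamma_pos_of_pos (by positivity)
  have h2p : (0:ℝ) < (2:ℝ) ^ ((p:ℝ)/2) := Real.rpow_pos_of_pos (by norm_num) _
  set C : ℝ := Real.exp (lam/2) * 2 ^ ((p:ℝ)/2) * Real.Gamma ((p:ℝ)/2 + 1) with hCdef
  have hC : 0 < C := by positivity
  have hc0C : QAux.c0 p lam = C⁻¹ := by
    unfold QAux.c0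
    rw [hCdef, show (-lam/2 : ℝ) = -(lam/2) by ring, Real.exp_neg]
    field_simp
  have hexp1 : ((p:ℝ)/2) * (2/(p:ℝ)) = 1 := by field_simp
  have hbase : ∀ s : ℝ,
      s⁻¹ * Real.exp (lam/2) * 2 ^ ((p:ℝ)/2) * Real.Gamma ((p:ℝ)/2 + 1) = s⁻¹ * C := by
    intro s; rw [hCdef]; ring
  -- Step 1 : a s → 0
  have hlim : Tendsto a atTop (nhds 0) := by
    refine tendsto_order.2 ⟨fun b hb => ?_, fun ε hε => ?_⟩
    · filter_upwards [eventually_gt_atTop (1:ℝ)] with s hs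
      exact lt_trans hb (ha s hs).1
    · set δ : ℝ := min ε 1 with hδdef
      have hδ : 0 < δ := lt_min hε one_pos
      set m : ℝ := QAux.c0 p lam * δ ^ ((p:ℝ)/2) * Real.exp (-δ/2) with hmdef
      have hm : 0 < m := by
        have h := QAux.c0_pos hp lam
        positivity
      filter_upwards [eventually_gt_atTop (max 1 m⁻¹)] with s hs
      have hs1 : 1 < s := (le_max_left _ _).trans_lt hs
      obtain ⟨has, heq⟩ := ha s hs1
      by_contra hcon
      push_neg at hcon
      have hδa : δ ≤ a s := le_trans (min_le_left _ _) hcon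
      have h1 : m ≤ ncChiSqCDF p lam δ := QAux.ncF_ge hp hlam hδ
      have h2 : ncChiSqCDF p lam δ ≤ ncChiSqCDF p lam (a s) := QAux.ncF_mono hp hlam hδ hδa
      have h3 : 1/s < m := by
        rw [div_lt_iff₀ (by linarith : (0:ℝ) < s)]
        calc (1:ℝ) = m * m⁻¹ := (mul_inv_cancel₀ (ne_of_gt hm)).symm
          _ < m * s := mul_lt_mul_of_pos_left ((le_max_right _ _).trans_lt hs) hm
      rw [heq] at h2
      linarith [h1.trans h2]
  -- Step 2 : two-sided bounds on the ratio for s > 1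
  have hkey : ∀ s : ℝ, 1 < s →
      Real.exp (-(lam * a s)/(2*(p:ℝ))) ≤ a s / (s⁻¹ * C) ^ (2/(p:ℝ))
      ∧ a s / (s⁻¹ * C) ^ (2/(p:ℝ)) ≤ Real.exp (a s/(p:ℝ)) := by
    intro s hs
    obtain ⟨has, heq⟩ := ha s hs
    have hs0 : (0:ℝ) < s := by linarith
    have hsC : 0 < s⁻¹ * C := by positivity
    have hB : 0 < (s⁻¹ * C) ^ (2/(p:ℝ)) := Real.rpow_pos_of_pos hsC _
    have hrpow_a : ((a s) ^ ((p:ℝ)/2)) ^ (2/(p:ℝ)) = a s := by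
      rw [← Real.rpow_mul has.le, hexp1, Real.rpow_one]
    have hexp_rpow : ∀ x : ℝ, (Real.exp x) ^ (2/(p:ℝ)) = Real.exp (x * (2/(p:ℝ))) := by
      intro x
      rw [Real.rpow_def_of_pos (Real.exp_pos x), Real.log_exp]
    constructor
    · -- lower bound
      have hle : 1/s ≤ C⁻¹ * ((a s) ^ ((p:ℝ)/2) * Real.exp (lam * a s/4)) := by
        have h := QAux.ncF_le hp hlam has
        rw [heq, hc0C] at h
        calc 1/s ≤ C⁻¹ * (a s) ^ ((p:ℝ)/2) * Real.exp (lam * a s/4) := h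
          _ = C⁻¹ * ((a s) ^ ((p:ℝ)/2) * Real.exp (lam * a s/4)) := by ring
      have h2 : s⁻¹ * C ≤ (a s) ^ ((p:ℝ)/2) * Real.exp (lam * a s/4) := by
        have := mul_le_mul_of_nonneg_left hle hC.le
        rw [mul_inv_cancel_left₀ (ne_of_gt hC)] at this
        calc s⁻¹ * C = C * (1/s) := by ring
          _ ≤ _ := this
      have h3 : (s⁻¹ * C) * Real.exp (-(lam * a s/4)) ≤ (a s) ^ ((p:ℝ)/2) := by
        have h4 := mul_le_mul_of_nonneg_right h2 (Real.exp_nonneg (-(lam * a s/4)))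
        refine le_trans (le_of_eq ?_) (h4.trans_eq ?_)
        · ring
        · rw [mul_assoc, ← Real.exp_add]
          simp
      have h5 := Real.rpow_le_rpow (by positivity) h3 (by positivity : (0:ℝ) ≤ 2/(p:ℝ))
      rw [hrpow_a, Real.mul_rpow hsC.le (Real.exp_nonneg _), hexp_rpow] at h5
      have harith : -(lam * a s/4) * (2/(p:ℝ)) = -(lam * a s)/(2*(p:ℝ)) := by
        field_simp; ring
      rw [harith] at h5
      rw [le_div_iff₀ hB]
      calc Real.exp (-(lam * a s)/(2*(p:ℝ))) * (s⁻¹ * C) ^ (2/(p:ℝ))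
          = (s⁻¹ * C) ^ (2/(p:ℝ)) * Real.exp (-(lam * a s)/(2*(p:ℝ))) := by ring
        _ ≤ a s := h5
    · -- upper bound
      have hge : C⁻¹ * ((a s) ^ ((p:ℝ)/2) * Real.exp (-(a s)/2)) ≤ 1/s := by
        have h := QAux.ncF_ge hp hlam has
        rw [heq, hc0C] at h
        calc C⁻¹ * ((a s) ^ ((p:ℝ)/2) * Real.exp (-(a s)/2))
            = C⁻¹ * (a s) ^ ((p:ℝ)/2) * Real.exp (-(a s)/2) := by ring
          _ ≤ 1/s := h
      have h2 : (a s) ^ ((p:ℝ)/2) * Real.exp (-(a s)/2) ≤ s⁻¹ * C := by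
        have := mul_le_mul_of_nonneg_left hge hC.le
        rw [mul_inv_cancel_left₀ (ne_of_gt hC)] at this
        calc (a s) ^ ((p:ℝ)/2) * Real.exp (-(a s)/2) ≤ C * (1/s) := this
          _ = s⁻¹ * C := by ring
      have h3 : (a s) ^ ((p:ℝ)/2) ≤ (s⁻¹ * C) * Real.exp (a s/2) := by
        have h4 := mul_le_mul_of_nonneg_right h2 (Real.exp_nonneg (a s/2))
        rw [mul_assoc, ← Real.exp_add] at h4
        have : -(a s)/2 + a s/2 = 0 := by ring
        rw [this, Real.exp_zero, mul_one] at h4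
        exact h4
      have h5 := Real.rpow_le_rpow (Real.rpow_nonneg has.le _) h3
        (by positivity : (0:ℝ) ≤ 2/(p:ℝ))
      rw [hrpow_a, Real.mul_rpow hsC.le (Real.exp_nonneg _), hexp_rpow] at h5
      have harith : a s/2 * (2/(p:ℝ)) = a s/(p:ℝ) := by
        field_simp
      rw [harith] at h5
      rw [div_le_iff₀ hB]
      calc a s ≤ (s⁻¹ * C) ^ (2/(p:ℝ)) * Real.exp (a s/(p:ℝ)) := h5
        _ = Real.exp (a s/(p:ℝ)) * (s⁻¹ * C) ^ (2/(p:ℝ)) := by ring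
  -- Step 3 : squeeze
  have hlo_t : Tendsto (fun s => Real.exp (-(lam * a s)/(2*(p:ℝ)))) atTop (nhds 1) := by
    have h2 : Tendsto (fun s => -(lam * a s)/(2*(p:ℝ))) atTop (nhds 0) := by
      have := ((hlim.const_mul lam).neg).div_const (2*(p:ℝ))
      simpa using this
    have h3 := (Real.continuous_exp.tendsto 0).comp h2
    simpa [Function.comp_def, Real.exp_zero] using h3
  have hhi_t : Tendsto (fun s => Real.exp (a s/(p:ℝ))) atTop (nhds 1) := by
    have h2 : Tendsto (fun s => a s/(p:ℝ)) atTop (nhds 0) := by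
      have := hlim.div_const (p:ℝ)
      simpa using this
    have h3 := (Real.continuous_exp.tendsto 0).comp h2
    simpa [Function.comp_def, Real.exp_zero] using h3
  simp only [hbase]
  refine tendsto_of_tendsto_of_tendsto_of_le_of_le' hlo_t hhi_t ?_ ?_
  · filter_upwards [eventually_gt_atTop (1:ℝ)] with s hs
    exact (hkey s hs).1
  · filter_upwards [eventually_gt_atTop (1:ℝ)] with s hs
    exact (hkey s hs).2
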